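/- Let M and K be skew-symmetric real d×d matrices, let S : ℝ^d × ℝ → ℝ be continuously differentiable in its first argument (gradient ∇_z S), let D be a skew-symmetric real N×N matrix, let x_0, …, x_{N−1} ∈ ℝ, and let z_j : ℝ → ℝ^d (j = 0, …, N−1) be differentiable functions satisfying the semi-discrete system M z_j'(t) + K Σ_{k=0}^{N−1} D_{jk} z_k(t) = ∇_z S(z_j(t), x_j) for all t and all j. Then for every j and every t, (d/dt) E_j(t) + Σ_{k=0}^{N−1} D_{jk} F_{jk}(t) = 0, where E_j(t) = S(z_j(t), x_j) − (1/2) z_j(t)ᵀ K Σ_{k=0}^{N−1} D_{jk} z_k(t) and F_{jk}(t) = (1/2) z_k(t)ᵀ K z_j'(t) + (1/2) z_j(t)ᵀ K z_k'(t). -/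

import Mathlib

open scoped Matrix

noncomputable def dotCLM {d : ℕ} (g : Fin d → ℝ) : (Fin d → ℝ) →L[ℝ] ℝ :=
  ∑ i : Fin d, g i • (ContinuousLinearMap.proj i : (Fin d → ℝ) →L[ℝ] ℝ)

lemma dotCLM_apply' {d : ℕ} (g v : Fin d → ℝ) :
    dotCLM g v = dotProduct g v := by
  simp [dotCLM, dotProduct, smul_eq_mul]

lemma skew_pair {d : ℕ} {K : Matrix (Fin d) (Fin d) ℝ} (hK : Kᵀ = -K) (a b : Fin d → ℝ) :
    dotProduct a (K.mulVec b) = - dotProduct b (K.mulVec a) := by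
  have h : ∀ i k, K k i = - K i k := by
    intro i k
    have := congrFun (congrFun hK i) k
    simpa [Matrix.transpose_apply] using this
  simp only [dotProduct, Matrix.mulVec, Finset.mul_sum, ← Finset.sum_neg_distrib]
  rw [Finset.sum_comm]
  refine Finset.sum_congr rfl fun i _ => Finset.sum_congr rfl fun k _ => ?_
  rw [h k i]; ring

lemma hasDerivAt_dotK {d : ℕ} (K : Matrix (Fin d) (Fin d) ℝ) {a b : ℝ → Fin d → ℝ}
    {a' b' : Fin d → ℝ} {t : ℝ} (ha : HasDerivAt a a' t) (hb : HasDerivAt b b' t) :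
    HasDerivAt (fun s => dotProduct (a s) (K.mulVec (b s)))
      (dotProduct a' (K.mulVec (b t)) + dotProduct (a t) (K.mulVec b')) t := by
  have hai : ∀ i, HasDerivAt (fun s => a s i) (a' i) t := fun i => hasDerivAt_pi.mp ha i
  have hbi : ∀ i, HasDerivAt (fun s => b s i) (b' i) t := fun i => hasDerivAt_pi.mp hb i
  simp only [dotProduct, Matrix.mulVec, ← Finset.sum_add_distrib]
  apply HasDerivAt.fun_sum
  intro i _
  exact (hai i).mul (HasDerivAt.fun_sum fun k _ => (hbi k).const_mul (K i k))

theorem stmt2 {d N : ℕ} (M K : Matrix (Fin d) (Fin d) ℝ)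
    (hM : Mᵀ = -M) (hK : Kᵀ = -K)
    (S : (Fin d → ℝ) → ℝ → ℝ) (gradS : (Fin d → ℝ) → ℝ → (Fin d → ℝ))
    (hS : ∀ (x : ℝ) (w : Fin d → ℝ), HasFDerivAt (fun w' => S w' x) (dotCLM (gradS w x)) w)
    (hSc : ∀ x : ℝ, Continuous fun w => gradS w x)
    (D : Matrix (Fin N) (Fin N) ℝ) (hD : Dᵀ = -D)
    (x : Fin N → ℝ)
    (z : Fin N → ℝ → (Fin d → ℝ)) (hdiff : ∀ j, Differentiable ℝ (z j))
    (hode : ∀ (t : ℝ) (j : Fin N),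
      M.mulVec (deriv (z j) t) + K.mulVec (∑ k, D j k • z k t) = gradS (z j t) (x j))
    (E : Fin N → ℝ → ℝ) (F : Fin N → Fin N → ℝ → ℝ)
    (hE : ∀ j t, E j t = S (z j t) (x j)
        - (1/2) * dotProduct (z j t) (K.mulVec (∑ k, D j k • z k t)))
    (hF : ∀ j k t, F j k t = (1/2) * dotProduct (z k t) (K.mulVec (deriv (z j) t))
        + (1/2) * dotProduct (z j t) (K.mulVec (deriv (z k) t))) :
    ∀ (j : Fin N) (t : ℝ), deriv (E j) t + ∑ k, D j k * F j k t = 0 := by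
  intro j t
  have hzj : HasDerivAt (z j) (deriv (z j) t) t := (hdiff j t).hasDerivAt
  have hw : HasDerivAt (fun s => ∑ k, D j k • z k s) (∑ k, D j k • deriv (z k) t) t :=
    HasDerivAt.fun_sum fun k _ => ((hdiff k t).hasDerivAt).const_smul (D j k)
  have hSd : HasDerivAt (fun s => S (z j s) (x j))
      (dotProduct (gradS (z j t) (x j)) (deriv (z j) t)) t := by
    have := (hS (x j) (z j t)).comp_hasDerivAt t hzj
    rw [dotCLM_apply'] at this
    exact this
  set v' := deriv (z j) t
  set w := ∑ k, D j k • z k t with hwdef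
  set w' := ∑ k, D j k • deriv (z k) t with hw'def
  have hEd : HasDerivAt (E j)
      (dotProduct (gradS (z j t) (x j)) v'
        - (1/2) * (dotProduct v' (K.mulVec w) + dotProduct (z j t) (K.mulVec w'))) t := by
    have hfe : E j = fun s => S (z j s) (x j)
        - (1/2) * dotProduct (z j s) (K.mulVec (∑ k, D j k • z k s)) := funext (hE j)
    rw [hfe]
    exact hSd.sub ((hasDerivAt_dotK K hzj hw).const_mul (1/2))
  rw [hEd.deriv]
  rw [← hode t j]
  -- linearity lemmas
  have hsum1 : ∑ k, D j k * dotProduct (z k t) (K.mulVec v')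
      = dotProduct w (K.mulVec v') := by
    rw [hwdef]
    simp only [dotProduct, Finset.sum_apply, Pi.smul_apply, smul_eq_mul,
      Finset.sum_mul, Finset.mul_sum]
    rw [Finset.sum_comm]
    exact Finset.sum_congr rfl fun i _ => Finset.sum_congr rfl fun k _ => by ring
  have hKw' : K.mulVec w' = ∑ k, D j k • K.mulVec (deriv (z k) t) := by
    rw [hw'def]
    simp [Matrix.mulVec_sum, Matrix.mulVec_smul]
  have hsum2 : dotProduct (z j t) (K.mulVec w')
      = ∑ k, D j k * dotProduct (z j t) (K.mulVec (deriv (z k) t)) := by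
    rw [hKw']
    simp only [dotProduct, Finset.sum_apply, Pi.smul_apply, smul_eq_mul,
      Finset.sum_mul, Finset.mul_sum]
    rw [Finset.sum_comm]
    exact Finset.sum_congr rfl fun i _ => Finset.sum_congr rfl fun k _ => by ring
  have hMv : dotProduct (M.mulVec v') v' = 0 := by
    have := skew_pair hM v' v'
    rw [dotProduct_comm]
    linarith
  have hKwv : dotProduct (K.mulVec w) v' = dotProduct v' (K.mulVec w) :=
    dotProduct_comm _ _
  have hskew : dotProduct w (K.mulVec v') = - dotProduct v' (K.mulVec w) :=
    skew_pair hK w v'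
  simp only [hF, add_dotProduct]
  rw [Finset.sum_congr rfl (fun k _ => by ring :
    ∀ k ∈ Finset.univ, D j k * ((1/2) * dotProduct (z k t) (K.mulVec v')
        + (1/2) * dotProduct (z j t) (K.mulVec (deriv (z k) t)))
      = (1/2) * (D j k * dotProduct (z k t) (K.mulVec v'))
        + (1/2) * (D j k * dotProduct (z j t) (K.mulVec (deriv (z k) t))))]
  rw [Finset.sum_add_distrib, ← Finset.mul_sum, ← Finset.mul_sum, hsum1, ← hsum2]
  rw [hMv, hKwv, hskew]
  ring
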